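/- Let r ≥ 0 and let f(q) = q/(1-(-1)^{r+1}q) be a rational function over ℚ, with δ = q·d/dq acting on rational functions. Then for every i ≥ 1, the rational function identity (δ^i f)(q) + (-1)^i (δ^i f)(q^{-1}) = 0 holds (as an identity of rational functions in q). -/

import Mathlib

/-- The Euler derivation δ = q·d/dq acting on complex functions. -/
noncomputable def eulerC (g : ℂ → ℂ) : ℂ → ℂ := fun q => q * deriv g q

lemma eulerC_key (U : Set ℂ) (hU : IsOpen U) (hinv : ∀ x ∈ U, x⁻¹ ∈ U)
    (h0 : ∀ x ∈ U, x ≠ 0) (g : ℂ → ℂ) (hg : AnalyticOnNhd ℂ g U) (c K : ℂ)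
    (hgk : ∀ x ∈ U, g x + c * g x⁻¹ = K) :
    ∀ q ∈ U, eulerC g q - c * eulerC g q⁻¹ = 0 := by
  intro q hqU
  have hq0 : q ≠ 0 := h0 q hqU
  have hq' : q⁻¹ ∈ U := hinv q hqU
  have hd1 : HasDerivAt g (deriv g q) q := ((hg q hqU).differentiableAt).hasDerivAt
  have hd2 : HasDerivAt g (deriv g q⁻¹) q⁻¹ := ((hg _ hq').differentiableAt).hasDerivAt
  have hinvd : HasDerivAt (fun x : ℂ => x⁻¹) (-(q ^ 2)⁻¹) q := hasDerivAt_inv hq0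
  have hcomp : HasDerivAt (fun x : ℂ => g x⁻¹) (deriv g q⁻¹ * -(q ^ 2)⁻¹) q :=
    (hd2.comp q hinvd)
  have hh : HasDerivAt (fun x : ℂ => g x + c * g x⁻¹)
      (deriv g q + c * (deriv g q⁻¹ * -(q ^ 2)⁻¹)) q := hd1.add (hcomp.const_mul c)
  have heq : (fun x : ℂ => g x + c * g x⁻¹) =ᶠ[nhds q] fun _ => K := by
    filter_upwards [hU.mem_nhds hqU] with x hx using hgk x hx
  have hz : deriv g q + c * (deriv g q⁻¹ * -(q ^ 2)⁻¹) = 0 := by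
    have h := hh.deriv
    rw [Filter.EventuallyEq.deriv_eq heq, deriv_const] at h
    exact h.symm
  simp only [eulerC]
  field_simp at hz ⊢
  linear_combination hz

lemma stmt_aux (ε : ℂ) (hε2 : ε * ε = 1) (i : ℕ) (hi : 1 ≤ i) (q : ℂ) (hq : q ≠ 0)
    (h1 : 1 - ε * q ≠ 0) :
    (eulerC^[i] (fun x => x / (1 - ε * x))) q +
      (-1 : ℂ) ^ i * (eulerC^[i] (fun x => x / (1 - ε * x))) q⁻¹ = 0 := by
  have hεne : ε ≠ 0 := by
    intro h; rw [h] at hε2; simp at hε2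
  set U : Set ℂ := {x | x ≠ 0 ∧ 1 - ε * x ≠ 0} with hUdef
  have hUopen : IsOpen U := by
    have : U = (fun x : ℂ => x) ⁻¹' {0}ᶜ ∩ (fun x : ℂ => 1 - ε * x) ⁻¹' {0}ᶜ := by
      ext x; simp [hUdef]
    rw [this]
    exact (isOpen_compl_singleton.preimage continuous_id).inter
      (isOpen_compl_singleton.preimage (by continuity))
  have hxε : ∀ x : ℂ, 1 - ε * x ≠ 0 → x - ε ≠ 0 := by
    intro x hx1 h
    apply hx1
    have : x = ε := by linear_combination h
    rw [this]
    linear_combination -hε2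
  have hinvU : ∀ x ∈ U, x⁻¹ ∈ U := by
    rintro x ⟨hx0, hx1⟩
    refine ⟨inv_ne_zero hx0, fun h => ?_⟩
    have h' : x - ε = 0 := by
      have := hxε x hx1
      field_simp at h
      linear_combination h
    exact hxε x hx1 h'
  have h0U : ∀ x ∈ U, x ≠ 0 := fun x hx => hx.1
  set f : ℂ → ℂ := fun x => x / (1 - ε * x) with hf
  have hfan : AnalyticOnNhd ℂ f U :=
    analyticOnNhd_id.div ((analyticOnNhd_const).sub ((analyticOnNhd_const).mul analyticOnNhd_id))
      (fun x hx => hx.2)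
  have hiter : ∀ n, AnalyticOnNhd ℂ (eulerC^[n] f) U := by
    intro n
    induction n with
    | zero => simpa using hfan
    | succ n ih =>
      rw [Function.iterate_succ_apply']
      exact analyticOnNhd_id.mul (ih.deriv)
  have hbase : ∀ x ∈ U, f x + 1 * f x⁻¹ = -ε := by
    rintro x ⟨hx0, hx1⟩
    have hx2 : 1 - ε * x⁻¹ ≠ 0 := (hinvU x ⟨hx0, hx1⟩).2
    have hx3 : x - ε ≠ 0 := hxε x hx1
    rw [hf]
    simp only
    have hx1' : 1 - x * ε ≠ 0 := by rwa [mul_comm]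
    field_simp
    linear_combination (-(x^2 + 1 - x*ε)) * hε2
  have main : ∀ n, 1 ≤ n → ∀ x ∈ U, (eulerC^[n] f) x + (-1:ℂ)^n * (eulerC^[n] f) x⁻¹ = 0 := by
    intro n
    induction n with
    | zero => omega
    | succ n ih =>
      intro _ x hx
      rcases Nat.eq_zero_or_pos n with h | h
      · subst h
        have hk := eulerC_key U hUopen hinvU h0U f hfan 1 (-ε) hbase x hx
        simpa [Function.iterate_one] using by linear_combination hk
      · have hprev : ∀ y ∈ U, (eulerC^[n] f) y + ((-1:ℂ)^n) * (eulerC^[n] f) y⁻¹ = 0 := ih h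
        have hk := eulerC_key U hUopen hinvU h0U (eulerC^[n] f) (hiter n) ((-1:ℂ)^n) 0
          (by intro y hy; simpa using hprev y hy) x hx
        rw [Function.iterate_succ_apply']
        simpa [pow_succ] using by linear_combination hk
  exact main i hi q ⟨hq, h1⟩

theorem stmt_6 (r i : ℕ) (hi : 1 ≤ i) (q : ℂ) (hq : q ≠ 0)
    (h1 : 1 - (-1 : ℂ) ^ (r + 1) * q ≠ 0)
    (h2 : 1 - (-1 : ℂ) ^ (r + 1) * q⁻¹ ≠ 0) :
    (eulerC^[i] (fun x => x / (1 - (-1 : ℂ) ^ (r + 1) * x))) q +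
      (-1 : ℂ) ^ i * (eulerC^[i] (fun x => x / (1 - (-1 : ℂ) ^ (r + 1) * x))) q⁻¹ = 0 := by
  have hε2 : (-1 : ℂ) ^ (r + 1) * (-1 : ℂ) ^ (r + 1) = 1 := by
    rw [← pow_add, show r + 1 + (r + 1) = 2 * (r + 1) by ring, pow_mul]
    norm_num
  exact stmt_aux _ hε2 i hi q hq h1
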